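/- The Jacobian J = B·D̄ has the eigenvalue 0 with algebraic multiplicity exactly n, and its remaining M − n eigenvalues (counted with multiplicity, as roots of its characteristic polynomial) are all negative real numbers. -/

import Mathlib

open Matrix Polynomial

lemma my_charpoly_conj {m : Type*} [Fintype m] [DecidableEq m] {R : Type*} [CommRing R]
    (U V A : Matrix m m R) (hUV : U * V = 1) :
    (U * A * V).charpoly = A.charpoly := by
  let f : Matrix m m R →+* Matrix m m R[X] := (C : R →+* R[X]).mapMatrix
  have hfUV : f U * f V = 1 := by rw [← _root_.map_mul f, hUV, _root_.map_one f]
  have key : charmatrix (U * A * V) = f U * charmatrix A * f V := by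
    unfold charmatrix
    rw [mul_sub, sub_mul]
    congr 1
    · rw [show f U * Matrix.scalar m (X : R[X]) = Matrix.scalar m (X : R[X]) * f U from
        (Matrix.scalar_commute (X : R[X]) (Commute.all _) (f U)).symm, mul_assoc, hfUV, mul_one]
    · simp only [RingHom.mapMatrix_apply, f, Matrix.map_mul]
  rw [Matrix.charpoly, Matrix.charpoly, key, Matrix.det_mul, Matrix.det_mul]
  have h2 : (f U).det * (charmatrix A).det * (f V).det
      = (charmatrix A).det * ((f U * f V).det) := by rw [Matrix.det_mul]; ring
  rw [h2, hfUV, Matrix.det_one, mul_one]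

lemma my_charpoly_diagonal {M : ℕ} (v : Fin M → ℝ) :
    (Matrix.diagonal v).charpoly = ∏ i, (X - C (v i)) := by
  rw [Matrix.charpoly_of_upperTriangular _ (Matrix.blockTriangular_diagonal v)]
  simp

lemma my_charpoly_hermitian {M : ℕ} (S : Matrix (Fin M) (Fin M) ℝ) (hS : S.IsHermitian) :
    S.charpoly = ∏ i, (X - C (hS.eigenvalues i)) := by
  have h := hS.spectral_theorem
  have hU : (hS.eigenvectorUnitary : Matrix (Fin M) (Fin M) ℝ)
      * (star hS.eigenvectorUnitary : Matrix (Fin M) (Fin M) ℝ) = 1 := by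
    simpa using (Matrix.mem_unitaryGroup_iff).mp hS.eigenvectorUnitary.2
  conv_lhs => rw [h]
  rw [Unitary.conjStarAlgAut_apply]
  rw [my_charpoly_conj _ _ _ hU]
  have : (RCLike.ofReal ∘ hS.eigenvalues : Fin M → ℝ) = hS.eigenvalues := by
    ext i; simp
  rw [this, my_charpoly_diagonal]

lemma my_rank_one_sub_add_rank {M : ℕ} (P : Matrix (Fin M) (Fin M) ℝ) (h : P * P = P) :
    (1 - P).rank + P.rank = M := by
  have hrange : LinearMap.range (1 - P).mulVecLin = LinearMap.ker P.mulVecLin := by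
    apply le_antisymm
    · rintro x ⟨y, rfl⟩
      simp only [LinearMap.mem_ker, Matrix.mulVecLin_apply] at *
      have := congrArg (fun A => A *ᵥ y) h
      simp only [← Matrix.mulVec_mulVec] at this
      simp [Matrix.sub_mulVec, Matrix.one_mulVec, Matrix.mulVec_sub, this]
    · intro x hx
      simp only [LinearMap.mem_ker, Matrix.mulVecLin_apply] at hx
      exact ⟨x, by simp [Matrix.sub_mulVec, Matrix.one_mulVec, hx]⟩
  have := LinearMap.finrank_range_add_finrank_ker P.mulVecLin
  rw [Matrix.rank, Matrix.rank, hrange]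
  rw [add_comm, this]
  simp [Module.finrank_fintype_fun_eq_card]


/-- With `D = diagonal d`, `D̄ = diagonal q` (all entries positive) and
`C·D·Cᵀ` invertible, the Jacobian `J = B·D̄`, where
`B = D·Cᵀ·(C·D·Cᵀ)⁻¹·C·D − D`, has the eigenvalue `0` with algebraic multiplicity
exactly `n`, and its remaining `M − n` eigenvalues (counted with multiplicity as roots
of its characteristic polynomial, viewed over `ℂ`) are all negative real numbers. -/
theorem Jacobian_spectrum
    (n M : ℕ) (C : Matrix (Fin n) (Fin M) ℝ) (d q : Fin M → ℝ)
    (hd : ∀ m, 0 < d m) (hq : ∀ m, 0 < q m)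
    (hinv : IsUnit (C * Matrix.diagonal d * Cᵀ)) :
    (((Matrix.diagonal d * Cᵀ * (C * Matrix.diagonal d * Cᵀ)⁻¹ * C * Matrix.diagonal d
        - Matrix.diagonal d) * Matrix.diagonal q).charpoly.map
          (algebraMap ℝ ℂ)).rootMultiplicity 0 = n
    ∧ ∀ z ∈ (((Matrix.diagonal d * Cᵀ * (C * Matrix.diagonal d * Cᵀ)⁻¹ * C * Matrix.diagonal d
        - Matrix.diagonal d) * Matrix.diagonal q).charpoly.map (algebraMap ℝ ℂ)).roots,
        z ≠ 0 → z.im = 0 ∧ z.re < 0 := by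
  classical
  set A := C * Matrix.diagonal d * Cᵀ with hA
  have hdet : IsUnit A.det := (Matrix.isUnit_iff_isUnit_det A).mp hinv
  have hAA : A * A⁻¹ = 1 := Matrix.mul_nonsing_inv A hdet
  have hA'A : A⁻¹ * A = 1 := Matrix.nonsing_inv_mul A hdet
  set s : Fin M → ℝ := fun m => Real.sqrt (d m) with hs
  set t : Fin M → ℝ := fun m => Real.sqrt (q m) with ht
  have hsne : ∀ m, s m ≠ 0 := fun m => (Real.sqrt_pos.mpr (hd m)).ne'
  have htne : ∀ m, t m ≠ 0 := fun m => (Real.sqrt_pos.mpr (hq m)).ne'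
  set E := Matrix.diagonal s with hE
  set F := Matrix.diagonal t with hF
  have hET : Eᵀ = E := by rw [hE, Matrix.diagonal_transpose]
  have hFT : Fᵀ = F := by rw [hF, Matrix.diagonal_transpose]
  have hEE : E * E = Matrix.diagonal d := by
    rw [hE, Matrix.diagonal_mul_diagonal,
      show (fun i => s i * s i) = d from funext fun m => Real.mul_self_sqrt (hd m).le]
  have hFF : F * F = Matrix.diagonal q := by
    rw [hF, Matrix.diagonal_mul_diagonal,
      show (fun i => t i * t i) = q from funext fun m => Real.mul_self_sqrt (hq m).le]
  have hAT : Aᵀ = A := by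
    rw [hA]; simp [Matrix.transpose_mul, Matrix.diagonal_transpose, Matrix.mul_assoc]
  set P := E * Cᵀ * A⁻¹ * C * E with hP
  -- P is idempotent
  have hPP : P * P = P := by
    rw [hP]
    simp only [← Matrix.mul_assoc]
    rw [Matrix.mul_assoc (E * Cᵀ * A⁻¹ * C) E E, hEE,
      Matrix.mul_assoc (E * Cᵀ * A⁻¹) C (Matrix.diagonal d),
      Matrix.mul_assoc (E * Cᵀ * A⁻¹) (C * Matrix.diagonal d) Cᵀ, ← hA,
      Matrix.mul_assoc (E * Cᵀ) A⁻¹ A, hA'A, Matrix.mul_one]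
  -- P is symmetric
  have hPT : Pᵀ = P := by
    rw [hP]
    simp only [Matrix.transpose_mul, Matrix.transpose_transpose,
      Matrix.transpose_nonsing_inv, hAT, hET, Matrix.mul_assoc]
  -- (C * E) * P = C * E
  have hCEP : C * E * P = C * E := by
    rw [hP]
    simp only [← Matrix.mul_assoc]
    rw [Matrix.mul_assoc C E E, hEE, ← hA, hAA, Matrix.one_mul]
  -- rank computations
  have hrankA : A.rank = n := by rw [Matrix.rank_of_isUnit A hinv, Fintype.card_fin]
  have hAfact : A = (C * E) * (E * Cᵀ) := by
    rw [hA, ← hEE]; simp only [Matrix.mul_assoc]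
  have hrankCE : (C * E).rank = n := by
    apply le_antisymm
    · exact (Matrix.rank_le_card_height _).trans (Fintype.card_fin n).le
    · have h1 : A.rank ≤ (C * E).rank := by
        conv_lhs => rw [hAfact]
        exact Matrix.rank_mul_le_left _ _
      exact le_of_eq_of_le hrankA.symm h1
  have hrankP : P.rank = n := by
    apply le_antisymm
    · have hfac : P = (E * Cᵀ * A⁻¹) * (C * E) := by rw [hP]; simp only [Matrix.mul_assoc]
      rw [hfac]
      exact (Matrix.rank_mul_le_right _ _).trans hrankCE.le
    · refine le_of_eq_of_le hrankCE.symm ?_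
      refine le_of_eq_of_le (congrArg Matrix.rank hCEP.symm) ?_
      exact Matrix.rank_mul_le_right _ _
  have hrank1P : (1 - P).rank + n = M := by rw [← hrankP]; exact my_rank_one_sub_add_rank P hPP
  -- the symmetric conjugated matrix S
  set S := F * E * (P - 1) * E * F with hSdef
  have hCT : ∀ (X : Matrix (Fin M) (Fin M) ℝ), Xᴴ = Xᵀ := fun X =>
    Matrix.conjTranspose_eq_transpose_of_trivial X
  have hST : S.IsHermitian := by
    show Sᴴ = S
    rw [hCT, hSdef]
    simp only [Matrix.transpose_mul, Matrix.transpose_sub, Matrix.transpose_one, hPT,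
      hET, hFT, Matrix.mul_assoc]
  -- -S is positive semidefinite
  have hQQ : (1 - P) * (1 - P) = 1 - P := by
    rw [sub_mul, one_mul, mul_sub, mul_one, hPP]; abel
  have hNSform : -S = ((1 - P) * (E * F))ᵀ * ((1 - P) * (E * F)) := by
    rw [Matrix.transpose_mul, Matrix.transpose_mul, Matrix.transpose_sub, Matrix.transpose_one,
      hPT, hET, hFT]
    simp only [← Matrix.mul_assoc]
    rw [Matrix.mul_assoc (F * E) (1 - P) (1 - P), hQQ, hSdef,
      show (1 : Matrix (Fin M) (Fin M) ℝ) - P = -(P - 1) from (neg_sub P 1).symm]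
    simp only [Matrix.mul_neg, Matrix.neg_mul]
  have hNS : Matrix.PosSemidef (-S) := by
    rw [hNSform, ← hCT]
    exact Matrix.posSemidef_conjTranspose_mul_self _
  -- eigenvalues
  set lam := hST.eigenvalues with hlam
  have hlamle : ∀ i, lam i ≤ 0 := by
    intro i
    have h1 := hST.eigenvalues_eq i
    have h2 := hNS.dotProduct_mulVec_nonneg ⇑(hST.eigenvectorBasis i)
    rw [Matrix.neg_mulVec, dotProduct_neg] at h2
    simp only [RCLike.re_to_real] at h1
    rw [← hlam] at h1
    linarith [h1, h2]
  -- determinant units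
  have hdetE : IsUnit E.det := by
    rw [hE, Matrix.det_diagonal]
    exact isUnit_iff_ne_zero.mpr (Finset.prod_ne_zero_iff.mpr fun m _ => hsne m)
  have hdetF : IsUnit F.det := by
    rw [hF, Matrix.det_diagonal]
    exact isUnit_iff_ne_zero.mpr (Finset.prod_ne_zero_iff.mpr fun m _ => htne m)
  have hdetFE : IsUnit (F * E).det := by rw [Matrix.det_mul]; exact hdetF.mul hdetE
  have hdetneg : IsUnit ((-1 : Matrix (Fin M) (Fin M) ℝ)).det :=
    (Matrix.isUnit_iff_isUnit_det _).mp (IsUnit.neg isUnit_one)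
  have hrankS : S.rank = M - n := by
    rw [hSdef,
      Matrix.rank_mul_eq_left_of_isUnit_det F (F * E * (P - 1) * E) hdetF,
      Matrix.rank_mul_eq_left_of_isUnit_det E (F * E * (P - 1)) hdetE,
      show F * E * (P - 1) = (F * E) * (P - 1) from rfl,
      Matrix.rank_mul_eq_right_of_isUnit_det (F * E) (P - 1) hdetFE,
      show P - 1 = (1 - P) * (-1) by rw [mul_neg_one, neg_sub],
      Matrix.rank_mul_eq_left_of_isUnit_det (-1) (1 - P) hdetneg]
    omega
  -- inverse of F
  set Finv := Matrix.diagonal (fun m => (t m)⁻¹) with hFinvdef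
  have hFinv : F * Finv = 1 := by
    rw [hF, hFinvdef, Matrix.diagonal_mul_diagonal,
      show (fun m => t m * (t m)⁻¹) = fun _ => (1 : ℝ) from funext fun m => mul_inv_cancel₀ (htne m),
      Matrix.diagonal_one]
  -- charpoly of the Jacobian equals charpoly of S
  have hJ : (Matrix.diagonal d * Cᵀ * A⁻¹ * C * Matrix.diagonal d - Matrix.diagonal d)
      * Matrix.diagonal q = E * (P - 1) * E * (F * F) := by
    rw [← hEE, ← hFF, hP]
    simp only [Matrix.mul_sub, Matrix.sub_mul, mul_one, one_mul, Matrix.mul_assoc]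
  have hFJF : F * ((Matrix.diagonal d * Cᵀ * A⁻¹ * C * Matrix.diagonal d - Matrix.diagonal d)
      * Matrix.diagonal q) * Finv = S := by
    rw [hJ, hSdef]
    simp only [Matrix.mul_assoc]
    rw [hFinv, mul_one]
  have hcharJ : ((Matrix.diagonal d * Cᵀ * A⁻¹ * C * Matrix.diagonal d - Matrix.diagonal d)
      * Matrix.diagonal q).charpoly = ∏ i, (X - Polynomial.C (lam i)) := by
    rw [← my_charpoly_conj F Finv _ hFinv, hFJF]
    exact my_charpoly_hermitian S hST
  -- the mapped polynomial and its roots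
  have hmap : (((Matrix.diagonal d * Cᵀ * A⁻¹ * C * Matrix.diagonal d - Matrix.diagonal d)
      * Matrix.diagonal q).charpoly).map (algebraMap ℝ ℂ)
      = ((Finset.univ.val.map fun i => ((lam i : ℝ) : ℂ)).map fun a => X - Polynomial.C a).prod := by
    rw [hcharJ, Polynomial.map_prod]
    rw [Finset.prod_eq_multiset_prod, Multiset.map_map]
    congr 1
    ext i
    simp
  have hroots : (((Matrix.diagonal d * Cᵀ * A⁻¹ * C * Matrix.diagonal d - Matrix.diagonal d)
      * Matrix.diagonal q).charpoly.map (algebraMap ℝ ℂ)).roots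
      = Finset.univ.val.map fun i => ((lam i : ℝ) : ℂ) := by
    rw [hmap, Polynomial.roots_multiset_prod_X_sub_C]
  constructor
  · rw [← Polynomial.count_roots, hroots, Multiset.count_map]
    have hfc : Finset.univ.val.filter (fun i => (0 : ℂ) = ((lam i : ℝ) : ℂ))
        = Finset.univ.val.filter (fun i => lam i = 0) := by
      apply Multiset.filter_congr
      intro i _
      rw [eq_comm, Complex.ofReal_eq_zero]
    rw [hfc]
    have hcard1 : Multiset.card (Finset.univ.val.filter (fun i => lam i = 0))
        = (Finset.univ.filter (fun i => lam i = 0)).card := rfl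
    rw [hcard1]
    have hsplit := Finset.card_filter_add_card_filter_not
      (s := (Finset.univ : Finset (Fin M))) (p := fun i => lam i = 0)
    rw [Finset.card_univ, Fintype.card_fin] at hsplit
    have hne : (Finset.univ.filter (fun i => ¬ lam i = 0)).card = M - n := by
      rw [← hrankS, hST.rank_eq_card_non_zero_eigs, Fintype.card_subtype]
    omega
  · intro z hz hz0
    rw [hroots, Multiset.mem_map] at hz
    obtain ⟨i, -, hi⟩ := hz
    subst hi
    refine ⟨Complex.ofReal_im _, ?_⟩
    rw [Complex.ofReal_re]
    have : lam i ≠ 0 := fun h => hz0 (by rw [h]; simp)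
    exact lt_of_le_of_ne (hlamle i) this
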